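/- arXiv:1506.04598 — 6 statements merged into one kernel-verified Lean document; each statement's English description precedes it below -/
import Mathlib

section
/- Let 𝔄 be an excellent based A-algebra. In the asymptotic ring 𝔄^∞ one has t_i t_{i'} = δ_{i,i'} t_i for all i, i' ∈ I₀. -/
open scoped Classical
open Finset

noncomputable section

/-- The ring `A = ℤ[v,v⁻¹]` of Laurent polynomials over `ℤ`. -/
abbrev LP : Type := LaurentPolynomial ℤ

/-- The coefficient of `v^n` in a Laurent polynomial. -/
def lcoeff (f : LP) (n : ℤ) : ℤ := (AddMonoidAlgebra.coeff f : ℤ →₀ ℤ) n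

/-- A based `A`-algebra (Lusztig, 1.9), encoded by its structure constants
`h i i' j` (the coefficient of `b j` in `b i * b i'`), the coordinates `e i` of the
unit element, the involution `einv` of the index set (written `i ↦ i^!`), and the
distinguished subset `I0` of `{i | i^! = i}`. -/
structure BasedAlgebra (I : Type) [Fintype I] [DecidableEq I] where
  h : I → I → I → LP
  e : I → LP
  einv : I → I
  I0 : Finset I
  einv_invol : ∀ i, einv (einv i) = i
  mul_assoc' : ∀ i j k l, ∑ m, h i j m * h m k l = ∑ m, h j k m * h i m l
  one_mul' : ∀ j k, ∑ i, e i * h i j k = if j = k then 1 else 0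
  mul_one' : ∀ j k, ∑ i, e i * h j i k = if j = k then 1 else 0
  anti' : ∀ i i' j, h (einv i) (einv i') (einv j) = h i' i j
  I0_fixed : ∀ i ∈ I0, einv i = i

namespace BasedAlgebra

variable {I : Type} [Fintype I] [DecidableEq I]

/-- The preorder `⪯_left` on `I`, generated by: `j ⪯_left i` if `h i' i j ≠ 0` for some `i'`. -/
def leLeft (B : BasedAlgebra I) : I → I → Prop :=
  Relation.ReflTransGen (fun j i => ∃ i', B.h i' i j ≠ 0)

/-- The preorder `⪯` on `I`, generated by:
`j ⪯ i` if `h i i' j ≠ 0` or `h i' i j ≠ 0` for some `i'`. -/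
def leTwo (B : BasedAlgebra I) : I → I → Prop :=
  Relation.ReflTransGen (fun j i => ∃ i', B.h i i' j ≠ 0 ∨ B.h i' i j ≠ 0)

/-- The equivalence relation `∼_left` whose classes are the left cells. -/
def simLeft (B : BasedAlgebra I) (i j : I) : Prop := B.leLeft i j ∧ B.leLeft j i

/-- The equivalence relation `∼` whose classes are the two-sided cells. -/
def simTwo (B : BasedAlgebra I) (i j : I) : Prop := B.leTwo i j ∧ B.leTwo j i

/-- `c` is a left cell. -/
def IsLeftCell (B : BasedAlgebra I) (c : Set I) : Prop := ∃ i, c = {j | B.simLeft j i}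

/-- `c` is a two-sided cell. -/
def IsTwoCell (B : BasedAlgebra I) (c : Set I) : Prop := ∃ i, c = {j | B.simTwo j i}

/-- Lusztig's `a`-function: `a j` is the smallest `m : ℕ` such that
`h i i' j ∈ v^{-m} ℤ[v]` for all `i, i'`. -/
def af (B : BasedAlgebra I) (j : I) : ℕ :=
  sInf {m : ℕ | ∀ i i' : I, ∀ n : ℤ, n < -(m : ℤ) → lcoeff (B.h i i' j) n = 0}

/-- The leading coefficients: `h i i' (j^!) = (hstar i i' j) v^{-a(j^!)} +` higher powers. -/
def hstar (B : BasedAlgebra I) (i i' j : I) : ℤ :=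
  lcoeff (B.h i i' (B.einv j)) (-(B.af (B.einv j) : ℤ))

/-- The based algebra is *excellent* if properties Q1–Q11 of Lusztig (1.9) hold. -/
structure Excellent (B : BasedAlgebra I) : Prop where
  q1 : ∀ j ∈ B.I0, ∀ i i', B.hstar i i' j ≠ 0 → i' = B.einv i
  q2 : ∀ i, ∃! j, j ∈ B.I0 ∧ B.hstar (B.einv i) i j ≠ 0
  q3 : ∀ i' i, B.leTwo i' i → B.af i ≤ B.af i'
  q4 : ∀ j ∈ B.I0, ∀ i, B.hstar (B.einv i) i j ≠ 0 → B.hstar (B.einv i) i j = 1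
  q5 : ∀ i j k, B.hstar i j k = B.hstar j k i
  q6 : ∀ i j k, B.hstar i j k ≠ 0 →
    B.simLeft i (B.einv j) ∧ B.simLeft j (B.einv k) ∧ B.simLeft k (B.einv i)
  q7 : ∀ i' i, B.leLeft i' i → B.af i' = B.af i → B.simLeft i' i
  q8 : ∀ i' i, B.leTwo i' i → B.af i' = B.af i → B.simTwo i' i
  q9a : ∀ i, ∃! j, j ∈ B.I0 ∧ B.simLeft j i
  q9b : ∀ i j, j ∈ B.I0 → B.simLeft j i → B.hstar (B.einv i) i j = 1
  q10 : ∀ i, B.simTwo i (B.einv i)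
  q11 : ∀ i i' j k, B.af j = B.af k → ∀ p q : ℤ,
    ∑ j', lcoeff (B.h k i' j') p * lcoeff (B.h i j' j) q
      = ∑ j', lcoeff (B.h i k j') q * lcoeff (B.h j' i' j) p

/-- The multiplication of the asymptotic ring `𝔄^∞`, on coordinates with respect to the
basis `{t_i}`: `t_i t_{i'} = ∑_j h*_{i,i',j^!} t_j`. -/
def tmul (B : BasedAlgebra I) (x y : I → ℤ) : I → ℤ :=
  fun j => ∑ i, ∑ i', x i * y i' * B.hstar i i' (B.einv j)

/-- The element `∑_{i ∈ I₀} t_i` of `𝔄^∞`. -/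
def tone (B : BasedAlgebra I) : I → ℤ := fun i => if i ∈ B.I0 then 1 else 0

/-- The basis element `t_i` of `𝔄^∞`. -/
def tbasis (B : BasedAlgebra I) (i : I) : I → ℤ := fun j => if j = i then 1 else 0

end BasedAlgebra

lemma hstar_key {I : Type} [Fintype I] [DecidableEq I]
    (B : BasedAlgebra I) (hB : B.Excellent) {i i' : I} (hi : i ∈ B.I0) (hi' : i' ∈ B.I0)
    (k : I) : B.hstar i i' k = if i = i' ∧ k = i then 1 else 0 := by
  by_cases h0 : B.hstar i i' k = 0
  · rw [h0]
    split_ifs with hc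
    · exfalso
      obtain ⟨rfl, rfl⟩ := hc
      have h1 : B.hstar (B.einv k) k k = 1 := hB.q9b k k hi (by exact ⟨.refl, .refl⟩)
      rw [B.I0_fixed k hi] at h1
      rw [h1] at h0; exact one_ne_zero h0
    · rfl
  · -- nonzero case
    have h5 : B.hstar i i' k = B.hstar k i i' := by rw [hB.q5, hB.q5]
    have hki : k = i := by
      have := hB.q1 i' hi' k i (by rw [← h5]; exact h0)
      have : B.einv i = B.einv (B.einv k) := by rw [← this]
      rw [B.einv_invol, B.I0_fixed i hi] at this
      exact this.symm
    subst hki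
    have h5' : B.hstar k i' k = B.hstar i' k k := by rw [hB.q5]
    have hii' : k = i' := by
      have := hB.q1 k hi i' k (by rw [← h5']; exact h0)
      rw [B.I0_fixed i' hi'] at this; exact this
    subst hii'
    have h1 : B.hstar (B.einv k) k k = 1 := hB.q9b k k hi (by exact ⟨.refl, .refl⟩)
    rw [B.I0_fixed k hi] at h1
    simp [h1]

/-- Lusztig 1.9. In the asymptotic ring `𝔄^∞` of an excellent based
`A`-algebra one has `t_i t_{i'} = δ_{i,i'} t_i` for `i, i' ∈ I₀`. -/
theorem statement1 {I : Type} [Fintype I] [DecidableEq I]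
    (B : BasedAlgebra I) (hB : B.Excellent) :
    ∀ i ∈ B.I0, ∀ i' ∈ B.I0,
      B.tmul (B.tbasis i) (B.tbasis i') = if i = i' then B.tbasis i else 0 := by
  intro i hi i' hi'
  funext j
  have hiff : B.einv j = i ↔ j = i := by
    constructor
    · intro h
      have := congrArg B.einv h
      rwa [B.einv_invol, B.I0_fixed i hi] at this
    · rintro rfl; exact B.I0_fixed j hi
  have hval : B.tmul (B.tbasis i) (B.tbasis i') j = B.hstar i i' (B.einv j) := by
    unfold BasedAlgebra.tmul BasedAlgebra.tbasis
    rw [Finset.sum_eq_single i]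
    · rw [Finset.sum_eq_single i']
      · simp
      · intro b _ hb; simp [hb]
      · simp
    · intro a _ ha; simp [ha]
    · simp
  rw [hval, hstar_key B hB hi hi' (B.einv j)]
  by_cases h : i = i' <;> by_cases h2 : j = i <;>
    simp_all [BasedAlgebra.tbasis, Pi.zero_apply, hiff]
end
end

section
/- Let 𝔄 be an excellent based A-algebra. For a two-sided cell 𝐜 of I set 𝔄^∞_𝐜 = Σ_{i∈𝐜} ℤ t_i ⊆ 𝔄^∞. Then for two-sided cells 𝐜, 𝐜' one has 𝔄^∞_𝐜 · 𝔄^∞_{𝐜'} = 0 if 𝐜 ≠ 𝐜' and 𝔄^∞_𝐜 · 𝔄^∞_𝐜 ⊆ 𝔄^∞_𝐜; each 𝔄^∞_𝐜 is an associative ring with unit element Σ_{i∈I₀∩𝐜} t_i, and 𝔄^∞ = ⊕_𝐜 𝔄^∞_𝐜 as a direct sum of rings. -/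
open scoped Classical
open Finset

noncomputable section

namespace BasedAlgebra

variable {I : Type} [Fintype I] [DecidableEq I] (B : BasedAlgebra I)

lemma einv_inj : Function.Injective B.einv := fun a b h => by
  have := congrArg B.einv h
  rwa [B.einv_invol, B.einv_invol] at this

lemma leLeft_leTwo {i j : I} (h : B.leLeft i j) : B.leTwo i j :=
  Relation.ReflTransGen.mono (p := fun j i => ∃ i', B.h i i' j ≠ 0 ∨ B.h i' i j ≠ 0)
    (fun _ _ ⟨i', hi⟩ => ⟨i', Or.inr hi⟩) _ _ h

lemma simLeft_simTwo {i j : I} (h : B.simLeft i j) : B.simTwo i j :=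
  ⟨B.leLeft_leTwo h.1, B.leLeft_leTwo h.2⟩

lemma simTwo_refl (i : I) : B.simTwo i i := ⟨.refl, .refl⟩

lemma simTwo_symm {i j : I} (h : B.simTwo i j) : B.simTwo j i := ⟨h.2, h.1⟩

lemma simTwo_trans {i j k : I} (h : B.simTwo i j) (h' : B.simTwo j k) : B.simTwo i k :=
  ⟨h.1.trans h'.1, h'.2.trans h.2⟩

lemma hstar_simTwo (hB : B.Excellent) {i i' k : I} (h : B.hstar i i' k ≠ 0) :
    B.simTwo i k ∧ B.simTwo i' k := by
  obtain ⟨h1, h2, h3⟩ := hB.q6 i i' k h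
  have hik' : B.simTwo i' k :=
    B.simTwo_trans (B.simLeft_simTwo h2) (B.simTwo_symm (hB.q10 k))
  have hii' : B.simTwo i i' :=
    B.simTwo_trans (B.simLeft_simTwo h1) (B.simTwo_symm (hB.q10 i'))
  exact ⟨B.simTwo_trans hii' hik', hik'⟩

lemma cell_closed {c : Set I} (hc : B.IsTwoCell c) {j k : I} (hj : j ∈ c)
    (h : B.simTwo k j) : k ∈ c := by
  obtain ⟨a, rfl⟩ := hc
  exact B.simTwo_trans h hj

lemma cell_eq {c c' : Set I} (hc : B.IsTwoCell c) (hc' : B.IsTwoCell c') {j : I}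
    (hj : j ∈ c) (hj' : j ∈ c') : c = c' := by
  obtain ⟨a, rfl⟩ := hc
  obtain ⟨b, rfl⟩ := hc'
  ext k
  constructor
  · intro h; exact B.simTwo_trans (B.simTwo_trans h (B.simTwo_symm hj)) hj'
  · intro h; exact B.simTwo_trans (B.simTwo_trans h (B.simTwo_symm hj')) hj

lemma unit_left (hB : B.Excellent) {c : Set I} (hc : B.IsTwoCell c) (x : I → ℤ)
    (hx : ∀ i, x i ≠ 0 → i ∈ c) :
    B.tmul (fun i => if i ∈ B.I0 ∧ i ∈ c then 1 else 0) x = x := by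
  funext j
  show (∑ i, ∑ i', (if i ∈ B.I0 ∧ i ∈ c then (1:ℤ) else 0) * x i' * B.hstar i i' (B.einv j))
      = x j
  have inner : ∀ i : I,
      (∑ i', (if i ∈ B.I0 ∧ i ∈ c then (1:ℤ) else 0) * x i' * B.hstar i i' (B.einv j))
        = (if i ∈ B.I0 ∧ i ∈ c then (1:ℤ) else 0) * x j * B.hstar i j (B.einv j) := by
    intro i
    apply Finset.sum_eq_single_of_mem j (Finset.mem_univ j)
    intro i' _ hne
    by_cases hi : i ∈ B.I0 ∧ i ∈ c
    · by_cases hh : B.hstar i i' (B.einv j) = 0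
      · rw [hh]; ring
      · exfalso
        have h2 : B.hstar i' (B.einv j) i ≠ 0 := by rw [← hB.q5]; exact hh
        have h3 := hB.q1 i hi.1 i' (B.einv j) h2
        exact hne (B.einv_inj h3).symm
    · simp [hi]
  rw [Finset.sum_congr rfl (fun i _ => inner i)]
  by_cases hxj : x j = 0
  · rw [hxj]; simp
  · have hjc : j ∈ c := hx j hxj
    obtain ⟨j0, ⟨hj0I, hj0ne⟩, huniq⟩ := hB.q2 (B.einv j)
    rw [B.einv_invol] at hj0ne
    have hj0c : j0 ∈ c :=
      B.cell_closed hc hjc (B.simTwo_symm (B.hstar_simTwo hB hj0ne).1)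
    have hval : B.hstar j (B.einv j) j0 = 1 := by
      have := hB.q4 j0 hj0I (B.einv j)
      rw [B.einv_invol] at this
      exact this hj0ne
    have hrot : ∀ i : I, B.hstar i j (B.einv j) = B.hstar j (B.einv j) i :=
      fun i => hB.q5 i j (B.einv j)
    calc (∑ i, (if i ∈ B.I0 ∧ i ∈ c then (1:ℤ) else 0) * x j * B.hstar i j (B.einv j))
        = ∑ i, (if i ∈ B.I0 ∧ i ∈ c then (1:ℤ) else 0) * x j * B.hstar j (B.einv j) i := by
          exact Finset.sum_congr rfl (fun i _ => by rw [hrot i])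
      _ = x j := by
          rw [Finset.sum_eq_single_of_mem j0 (Finset.mem_univ j0)]
          · rw [if_pos ⟨hj0I, hj0c⟩, hval]; ring
          · intro i _ hne
            by_cases hi : i ∈ B.I0 ∧ i ∈ c
            · by_cases hh : B.hstar j (B.einv j) i = 0
              · rw [hh]; ring
              · exfalso
                have : B.hstar (B.einv (B.einv j)) (B.einv j) i ≠ 0 := by
                  rw [B.einv_invol]; exact hh
                exact hne (huniq i ⟨hi.1, this⟩)
            · simp [hi]

lemma unit_right (hB : B.Excellent) {c : Set I} (hc : B.IsTwoCell c) (x : I → ℤ)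
    (hx : ∀ i, x i ≠ 0 → i ∈ c) :
    B.tmul x (fun i => if i ∈ B.I0 ∧ i ∈ c then 1 else 0) = x := by
  funext j
  show (∑ i, ∑ i', x i * (if i' ∈ B.I0 ∧ i' ∈ c then (1:ℤ) else 0) * B.hstar i i' (B.einv j))
      = x j
  rw [Finset.sum_comm]
  have inner : ∀ i' : I,
      (∑ i, x i * (if i' ∈ B.I0 ∧ i' ∈ c then (1:ℤ) else 0) * B.hstar i i' (B.einv j))
        = x j * (if i' ∈ B.I0 ∧ i' ∈ c then (1:ℤ) else 0) * B.hstar j i' (B.einv j) := by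
    intro i'
    apply Finset.sum_eq_single_of_mem j (Finset.mem_univ j)
    intro i _ hne
    by_cases hi' : i' ∈ B.I0 ∧ i' ∈ c
    · by_cases hh : B.hstar i i' (B.einv j) = 0
      · rw [hh]; ring
      · exfalso
        have h2 : B.hstar (B.einv j) i i' ≠ 0 := by
          rw [hB.q5 (B.einv j) i i']; exact hh
        have h3 := hB.q1 i' hi'.1 (B.einv j) i h2
        rw [h3, B.einv_invol] at hne
        exact hne rfl
    · simp [hi']
  rw [Finset.sum_congr rfl (fun i' _ => inner i')]
  by_cases hxj : x j = 0
  · rw [hxj]; simp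
  · have hjc : j ∈ c := hx j hxj
    obtain ⟨j0, ⟨hj0I, hj0ne⟩, huniq⟩ := hB.q2 j
    have hj0c : j0 ∈ c :=
      B.cell_closed hc hjc (B.simTwo_symm (B.hstar_simTwo hB hj0ne).2)
    have hval : B.hstar (B.einv j) j j0 = 1 := hB.q4 j0 hj0I j hj0ne
    have hrot : ∀ i' : I, B.hstar j i' (B.einv j) = B.hstar (B.einv j) j i' := by
      intro i'
      rw [hB.q5 j i' (B.einv j), hB.q5 i' (B.einv j) j]
    calc (∑ i', x j * (if i' ∈ B.I0 ∧ i' ∈ c then (1:ℤ) else 0) * B.hstar j i' (B.einv j))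
        = ∑ i', x j * (if i' ∈ B.I0 ∧ i' ∈ c then (1:ℤ) else 0) * B.hstar (B.einv j) j i' := by
          exact Finset.sum_congr rfl (fun i' _ => by rw [hrot i'])
      _ = x j := by
          rw [Finset.sum_eq_single_of_mem j0 (Finset.mem_univ j0)]
          · rw [if_pos ⟨hj0I, hj0c⟩, hval]; ring
          · intro i' _ hne
            by_cases hi' : i' ∈ B.I0 ∧ i' ∈ c
            · by_cases hh : B.hstar (B.einv j) j i' = 0
              · rw [hh]; ring
              · exact absurd (huniq i' ⟨hi'.1, hh⟩) hne
            · simp [hi']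

end BasedAlgebra

/-- Lusztig 1.9. For an excellent based `A`-algebra and two-sided cells
`𝐜, 𝐜'`: the subgroups `𝔄^∞_𝐜 = ∑_{i ∈ 𝐜} ℤ t_i` satisfy `𝔄^∞_𝐜 𝔄^∞_{𝐜'} = 0` for
`𝐜 ≠ 𝐜'` and `𝔄^∞_𝐜 𝔄^∞_𝐜 ⊆ 𝔄^∞_𝐜`; each `𝔄^∞_𝐜` is a ring with unit
`∑_{i ∈ I₀ ∩ 𝐜} t_i`; and `𝔄^∞ = ⊕_𝐜 𝔄^∞_𝐜` (the two-sided cells partition `I`). -/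
theorem statement5 {I : Type} [Fintype I] [DecidableEq I]
    (B : BasedAlgebra I) (hB : B.Excellent) :
    (∀ c c' : Set I, B.IsTwoCell c → B.IsTwoCell c' → c ≠ c' →
      ∀ x y : I → ℤ, (∀ i, x i ≠ 0 → i ∈ c) → (∀ i, y i ≠ 0 → i ∈ c') →
        B.tmul x y = 0) ∧
    (∀ c : Set I, B.IsTwoCell c →
      ∀ x y : I → ℤ, (∀ i, x i ≠ 0 → i ∈ c) → (∀ i, y i ≠ 0 → i ∈ c) →
        ∀ i, B.tmul x y i ≠ 0 → i ∈ c) ∧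
    (∀ c : Set I, B.IsTwoCell c →
      ∀ x : I → ℤ, (∀ i, x i ≠ 0 → i ∈ c) →
        B.tmul (fun i => if i ∈ B.I0 ∧ i ∈ c then 1 else 0) x = x ∧
        B.tmul x (fun i => if i ∈ B.I0 ∧ i ∈ c then 1 else 0) = x) ∧
    (∀ i : I, ∃ c : Set I, B.IsTwoCell c ∧ i ∈ c) ∧
    (∀ c c' : Set I, B.IsTwoCell c → B.IsTwoCell c' → c ≠ c' → Disjoint c c') := by
  obtain ⟨part3l, part3r⟩ : (∀ c : Set I, B.IsTwoCell c →
      ∀ x : I → ℤ, (∀ i, x i ≠ 0 → i ∈ c) →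
        B.tmul (fun i => if i ∈ B.I0 ∧ i ∈ c then 1 else 0) x = x) ∧
      (∀ c : Set I, B.IsTwoCell c →
      ∀ x : I → ℤ, (∀ i, x i ≠ 0 → i ∈ c) →
        B.tmul x (fun i => if i ∈ B.I0 ∧ i ∈ c then 1 else 0) = x) :=
    ⟨fun c hc x hx => B.unit_left hB hc x hx, fun c hc x hx => B.unit_right hB hc x hx⟩
  refine ⟨?_, ?_, fun c hc x hx => ⟨part3l c hc x hx, part3r c hc x hx⟩, ?_, ?_⟩
  · -- products of distinct cells vanish
    intro c c' hc hc' hne x y hx hy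
    funext j
    show (∑ i, ∑ i', x i * y i' * B.hstar i i' (B.einv j)) = 0
    apply Finset.sum_eq_zero
    intro i _
    apply Finset.sum_eq_zero
    intro i' _
    by_cases hxi : x i = 0
    · rw [hxi]; ring
    by_cases hyi : y i' = 0
    · rw [hyi]; ring
    by_cases hh : B.hstar i i' (B.einv j) = 0
    · rw [hh]; ring
    exfalso
    obtain ⟨h1, h2⟩ := B.hstar_simTwo hB hh
    have hii' : B.simTwo i i' := B.simTwo_trans h1 (B.simTwo_symm h2)
    have : i ∈ c' := B.cell_closed hc' (hy i' hyi) hii'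
    exact hne (B.cell_eq hc hc' (hx i hxi) this)
  · -- product within a cell stays in the cell
    intro c hc x y hx hy j hj
    obtain ⟨i, _, hi⟩ := Finset.exists_ne_zero_of_sum_ne_zero hj
    obtain ⟨i', _, hi'⟩ := Finset.exists_ne_zero_of_sum_ne_zero hi
    have hxi : x i ≠ 0 := fun h => hi' (by rw [h]; ring)
    have hh : B.hstar i i' (B.einv j) ≠ 0 := fun h => hi' (by rw [h]; ring)
    have h1 := (B.hstar_simTwo hB hh).1
    have hji : B.simTwo j i :=
      B.simTwo_trans (hB.q10 j) (B.simTwo_symm h1)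
    exact B.cell_closed hc (hx i hxi) hji
  · -- every element lies in a two-sided cell
    intro i
    exact ⟨{j | B.simTwo j i}, ⟨i, rfl⟩, B.simTwo_refl i⟩
  · -- distinct cells are disjoint
    intro c c' hc hc' hne
    rw [Set.disjoint_left]
    intro j hj hj'
    exact hne (B.cell_eq hc hc' hj hj')
end
end

section
/- Let 𝔄₀ be an excellent based A-algebra with basis {c_w : w ∈ I'}, involution w ↦ w^! and distinguished subset I₀', and let Ω be a finite group acting on the index set I' such that for every x ∈ Ω: h_{x(w),x(w'),x(w'')} = h_{w,w',w''} for all w,w',w'' (so that c_w ↦ c_{x(w)} extends to an A-algebra automorphism of 𝔄₀), x(w^!) = (x(w))^! for all w, and x(I₀') = I₀'. Let 𝔄₀⋊Ω be the free A-module with basis {c_w ⊗ x : w ∈ I', x ∈ Ω}, made into an A-algebra by (c_w ⊗ x)(c_{w'} ⊗ x') = (c_w · c_{x(w')}) ⊗ (xx') (the product c_w · c_{x(w')} computed in 𝔄₀), regarded as a based A-algebra with index set I'×Ω, involution (w,x)^! = (x⁻¹(w^!), x⁻¹), and distinguished subset {(d,1) : d ∈ I₀'}. Then 𝔄₀⋊Ω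 is an excellent based A-algebra. -/
open scoped Classical
open Finset

noncomputable section

namespace Statement10Aux

open BasedAlgebra Relation

variable {I' Om : Type} [Fintype I'] [DecidableEq I']
    [Fintype Om] [DecidableEq Om] [Group Om] [MulAction Om I']
    (B : BasedAlgebra I')
    (hact_h : ∀ (x : Om) (w w' w'' : I'), B.h (x • w) (x • w') (x • w'') = B.h w w' w'')
    (hact_inv : ∀ (x : Om) (w : I'), x • B.einv w = B.einv (x • w))

lemma lcoeff_zero (n : ℤ) : lcoeff 0 n = 0 := by simp [lcoeff]

set_option linter.unusedSectionVars false
include hact_h hact_inv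

lemma af_smul (x : Om) (j : I') : B.af (x • j) = B.af j := by
  unfold BasedAlgebra.af
  congr 1
  ext m
  simp only [Set.mem_setOf_eq]
  constructor
  · intro hm i i' n hn
    have := hm (x • i) (x • i') n hn
    rwa [hact_h] at this
  · intro hm i i' n hn
    have h1 : B.h i i' (x • j) = B.h (x⁻¹ • i) (x⁻¹ • i') j := by
      rw [← hact_h x (x⁻¹ • i) (x⁻¹ • i') j, smul_inv_smul, smul_inv_smul]
    rw [h1]; exact hm _ _ n hn

lemma e_smul (x : Om) (l : I') : B.e (x • l) = B.e l := by
  have key : ∀ i : I', ∑ jj, B.e (x • jj) * B.h jj i l = if i = l then 1 else 0 := by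
    intro i
    calc ∑ jj, B.e (x • jj) * B.h jj i l
        = ∑ jj, B.e (x • jj) * B.h (x • jj) (x • i) (x • l) :=
          Finset.sum_congr rfl fun jj _ => by rw [hact_h]
      _ = ∑ jj, B.e jj * B.h jj (x • i) (x • l) :=
          Equiv.sum_comp (MulAction.toPerm x) (fun jj => B.e jj * B.h jj (x • i) (x • l))
      _ = if x • i = x • l then 1 else 0 := B.one_mul' _ _
      _ = if i = l then 1 else 0 := by simp
  calc B.e (x • l) = ∑ jj, B.e (x • jj) * (if jj = l then 1 else 0) := by
        simp
    _ = ∑ jj, B.e (x • jj) * ∑ i, B.e i * B.h jj i l := by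
        refine Finset.sum_congr rfl fun jj _ => ?_
        rw [B.mul_one']
    _ = ∑ jj, ∑ i, B.e i * (B.e (x • jj) * B.h jj i l) := by
        refine Finset.sum_congr rfl fun jj _ => ?_
        rw [Finset.mul_sum]
        exact Finset.sum_congr rfl fun i _ => by ring
    _ = ∑ i, ∑ jj, B.e i * (B.e (x • jj) * B.h jj i l) := Finset.sum_comm
    _ = ∑ i, B.e i * ∑ jj, B.e (x • jj) * B.h jj i l := by
        refine Finset.sum_congr rfl fun i _ => (Finset.mul_sum _ _ _).symm
    _ = ∑ i, B.e i * (if i = l then 1 else 0) := by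
        refine Finset.sum_congr rfl fun i _ => by rw [key i]
    _ = B.e l := by simp

lemma hstar_smul (x : Om) (a b c : I') :
    B.hstar (x • a) (x • b) (x • c) = B.hstar a b c := by
  unfold BasedAlgebra.hstar
  rw [← hact_inv x c, hact_h, af_smul B hact_h hact_inv]

lemma exists_h_right (j : I') : ∃ i, B.h j i j ≠ 0 := by
  by_contra hc
  push_neg at hc
  have := B.mul_one' j j
  simp [hc] at this

lemma exists_h_left (j : I') : ∃ i, B.h i j j ≠ 0 := by
  by_contra hc
  push_neg at hc
  have := B.one_mul' j j
  simp [hc] at this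

lemma leLeft_smul (x : Om) {a b : I'} (hab : B.leLeft a b) :
    B.leLeft (x • a) (x • b) := by
  induction hab with
  | refl => exact Relation.ReflTransGen.refl
  | tail hac hcb ih =>
      obtain ⟨i', hi'⟩ := hcb
      exact ih.tail ⟨x • i', by rw [hact_h]; exact hi'⟩

lemma leTwo_smul (x : Om) {a b : I'} (hab : B.leTwo a b) :
    B.leTwo (x • a) (x • b) := by
  induction hab with
  | refl => exact Relation.ReflTransGen.refl
  | tail hac hcb ih =>
      obtain ⟨i', hi'⟩ := hcb
      refine ih.tail ⟨x • i', ?_⟩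
      rcases hi' with h1 | h1
      · exact Or.inl (by rw [hact_h]; exact h1)
      · exact Or.inr (by rw [hact_h]; exact h1)

lemma simLeft_smul (x : Om) {a b : I'} (hab : B.simLeft a b) :
    B.simLeft (x • a) (x • b) :=
  ⟨leLeft_smul B hact_h hact_inv x hab.1, leLeft_smul B hact_h hact_inv x hab.2⟩

/-- The crossed product `𝔄₀ ⋊ Ω`. -/
def cross : BasedAlgebra (I' × Om) where
  h p q r := if r.2 = p.2 * q.2 then B.h p.1 (p.2 • q.1) r.1 else 0
  e p := if p.2 = 1 then B.e p.1 else 0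
  einv p := (p.2⁻¹ • B.einv p.1, p.2⁻¹)
  I0 := B.I0 ×ˢ {1}
  einv_invol := by
    rintro ⟨w, x⟩
    show ((x⁻¹)⁻¹ • B.einv (x⁻¹ • B.einv w), (x⁻¹)⁻¹) = (w, x)
    rw [hact_inv x⁻¹ w, B.einv_invol, inv_inv, smul_inv_smul]
  mul_assoc' := by
    rintro ⟨w, x⟩ ⟨w', x'⟩ ⟨w'', x''⟩ ⟨l, t⟩
    rw [Fintype.sum_prod_type, Fintype.sum_prod_type]
    simp only [ite_mul, zero_mul, mul_ite, mul_zero]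
    have swap1 : ∀ (m : I') (y : Om),
        (if t = y * x'' then if y = x * x' then B.h w (x • w') m * B.h m (y • w'') l else 0 else 0)
        = (if y = x * x' then if t = y * x'' then B.h w (x • w') m * B.h m (y • w'') l else 0
            else 0) := by
      intros; split_ifs <;> rfl
    have swap2 : ∀ (m : I') (y : Om),
        (if t = x * y then if y = x' * x'' then B.h w' (x' • w'') m * B.h w (x • m) l else 0 else 0)
        = (if y = x' * x'' then if t = x * y then B.h w' (x' • w'') m * B.h w (x • m) l else 0
            else 0) := by
      intros; split_ifs <;> rfl
    simp only [swap1, swap2, Finset.sum_ite_eq', Finset.mem_univ, if_true]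
    by_cases ht : t = x * x' * x''
    · subst ht
      simp only [mul_assoc, eq_self_iff_true, if_true]
      rw [B.mul_assoc' w (x • w') ((x * x') • w'') l]
      rw [← Equiv.sum_comp (MulAction.toPerm x)
        (fun m => B.h (x • w') ((x * x') • w'') m * B.h w m l)]
      refine Finset.sum_congr rfl fun m _ => ?_
      simp only [MulAction.toPerm_apply]
      rw [← hact_h x w' (x' • w'') m, smul_smul]
    · rw [Finset.sum_congr rfl (fun m _ => if_neg ht),
        Finset.sum_congr rfl (fun m _ => if_neg (fun hc => ht (by rw [hc, mul_assoc])))]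
  one_mul' := by
    rintro ⟨j, x⟩ ⟨k, u⟩
    rw [Fintype.sum_prod_type]
    simp only [ite_mul, zero_mul, mul_ite, mul_zero]
    have swap : ∀ (i : I') (y : Om),
        (if u = y * x then if y = 1 then B.e i * B.h i (y • j) k else 0 else 0)
        = (if y = 1 then if u = y * x then B.e i * B.h i (y • j) k else 0 else 0) := by
      intros; split_ifs <;> rfl
    simp only [swap, Finset.sum_ite_eq', Finset.mem_univ, if_true, one_mul, one_smul]
    by_cases hu : u = x
    · simp only [hu, eq_self_iff_true, if_true]
      rw [B.one_mul' j k]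
      simp [Prod.ext_iff]
    · rw [Finset.sum_congr rfl (fun i _ => if_neg hu),
        if_neg (fun hc => hu (congrArg Prod.snd hc).symm)]
      simp
  mul_one' := by
    rintro ⟨j, x⟩ ⟨k, u⟩
    rw [Fintype.sum_prod_type]
    simp only [ite_mul, zero_mul, mul_ite, mul_zero]
    have swap : ∀ (i : I') (y : Om),
        (if u = x * y then if y = 1 then B.e i * B.h j (x • i) k else 0 else 0)
        = (if y = 1 then if u = x * y then B.e i * B.h j (x • i) k else 0 else 0) := by
      intros; split_ifs <;> rfl
    simp only [swap, Finset.sum_ite_eq', Finset.mem_univ, if_true, mul_one]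
    by_cases hu : u = x
    · simp only [hu, eq_self_iff_true, if_true]
      calc ∑ i, B.e i * B.h j (x • i) k
          = ∑ i, B.e (x • i) * B.h j (x • i) k :=
            Finset.sum_congr rfl fun i _ => by rw [e_smul B hact_h hact_inv]
        _ = ∑ i, B.e i * B.h j i k :=
            Equiv.sum_comp (MulAction.toPerm x) (fun i => B.e i * B.h j i k)
        _ = if j = k then 1 else 0 := B.mul_one' j k
        _ = if (j, x) = (k, x) then 1 else 0 := by simp [Prod.ext_iff]
    · rw [Finset.sum_congr rfl (fun i _ => if_neg hu),
        if_neg (fun hc => hu (congrArg Prod.snd hc).symm)]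
      simp
  anti' := by
    rintro ⟨w, x⟩ ⟨w', x'⟩ ⟨j, z⟩
    show (if z⁻¹ = x⁻¹ * x'⁻¹ then B.h (x⁻¹ • B.einv w) (x⁻¹ • x'⁻¹ • B.einv w')
        (z⁻¹ • B.einv j) else 0) = (if z = x' * x then B.h w' (x' • w) j else 0)
    by_cases hz : z = x' * x
    · have hz' : z⁻¹ = x⁻¹ * x'⁻¹ := by rw [hz, mul_inv_rev]
      rw [if_pos hz', if_pos hz]
      subst hz
      rw [← B.anti' (x' • w) w' j, ← hact_inv x' w]
      have h1 := hact_h (x' * x) (x⁻¹ • B.einv w) (x⁻¹ • x'⁻¹ • B.einv w')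
        ((x' * x)⁻¹ • B.einv j)
      rw [← h1]
      have hg : x' * x * (x⁻¹ * x'⁻¹) = 1 := by group
      simp [smul_smul, mul_inv_cancel_right, smul_inv_smul, hg, one_smul]
    · have hz' : z⁻¹ ≠ x⁻¹ * x'⁻¹ := by
        intro h
        apply hz
        rw [← inv_inv z, h, mul_inv_rev, inv_inv, inv_inv]
      rw [if_neg hz', if_neg hz]
  I0_fixed := by
    rintro ⟨d, y⟩ hd
    rw [Finset.mem_product, Finset.mem_singleton] at hd
    obtain ⟨hd1, hd2⟩ := hd
    have hy : y = 1 := hd2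
    subst hy
    show ((1 : Om)⁻¹ • B.einv d, (1 : Om)⁻¹) = (d, 1)
    rw [B.I0_fixed d hd1]
    simp

lemma cross_h (w w' w'' : I') (x x' x'' : Om) :
    (cross B hact_h hact_inv).h (w, x) (w', x') (w'', x'') =
      if x'' = x * x' then B.h w (x • w') w'' else 0 := rfl

lemma cross_einv (w : I') (x : Om) :
    (cross B hact_h hact_inv).einv (w, x) = (x⁻¹ • B.einv w, x⁻¹) := rfl

lemma cross_e (w : I') (x : Om) :
    (cross B hact_h hact_inv).e (w, x) = if x = 1 then B.e w else 0 := rfl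

lemma cross_I0 (p : I' × Om) :
    p ∈ (cross B hact_h hact_inv).I0 ↔ p.1 ∈ B.I0 ∧ p.2 = 1 := by
  show p ∈ B.I0 ×ˢ {1} ↔ _
  rw [Finset.mem_product, Finset.mem_singleton]

lemma af_cross (j : I') (z : Om) :
    (cross B hact_h hact_inv).af (j, z) = B.af j := by
  unfold BasedAlgebra.af
  congr 1
  ext m
  simp only [Set.mem_setOf_eq]
  constructor
  · intro hm a b n hn
    have := hm (a, 1) (b, z) n hn
    rw [cross_h] at this
    simpa using this
  · rintro hm ⟨a, u⟩ ⟨b, v⟩ n hn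
    rw [cross_h]
    split
    · exact hm _ _ n hn
    · exact lcoeff_zero n

lemma hstar_cross (w w' j : I') (x x' z : Om) :
    (cross B hact_h hact_inv).hstar (w, x) (w', x') (j, z)
      = if z = (x * x')⁻¹ then B.hstar (z • w) ((z * x) • w') j else 0 := by
  unfold BasedAlgebra.hstar
  rw [cross_einv, af_cross, af_smul B hact_h hact_inv, cross_h]
  by_cases hz : z = (x * x')⁻¹
  · have hz' : z⁻¹ = x * x' := by rw [hz, inv_inv]
    rw [if_pos hz', if_pos hz]
    have h1 := hact_h z w (x • w') (z⁻¹ • B.einv j)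
    rw [smul_smul, smul_inv_smul] at h1
    rw [← h1]
  · have hz' : z⁻¹ ≠ x * x' := fun h => hz (by rw [← inv_inv z, h])
    rw [if_neg hz', if_neg hz]
    exact lcoeff_zero _

lemma hstar_einv_cross (w j : I') (x z : Om) :
    (cross B hact_h hact_inv).hstar ((cross B hact_h hact_inv).einv (w, x)) (w, x) (j, z)
      = if z = 1 then B.hstar (B.einv (x⁻¹ • w)) (x⁻¹ • w) j else 0 := by
  rw [cross_einv, hstar_cross]
  by_cases hz : z = 1
  · rw [if_pos (show z = (x⁻¹ * x)⁻¹ by simp [hz]), if_pos hz, hz]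
    simp only [one_smul, one_mul]
    rw [hact_inv x⁻¹ w]
  · rw [if_neg (show z ≠ (x⁻¹ * x)⁻¹ by simpa using hz), if_neg hz]

lemma cross_leftstep_iff (j i : I') (z x : Om) :
    (∃ p : I' × Om, (cross B hact_h hact_inv).h p (i, x) (j, z) ≠ 0)
      ↔ (∃ a, B.h a (x⁻¹ • i) (z⁻¹ • j) ≠ 0) := by
  constructor
  · rintro ⟨⟨a, u⟩, hp⟩
    rw [cross_h] at hp
    by_cases hz : z = u * x
    · rw [if_pos hz] at hp
      refine ⟨z⁻¹ • a, ?_⟩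
      have h1 := hact_h z⁻¹ a (u • i) j
      rw [smul_smul] at h1
      have hzu : z⁻¹ * u = x⁻¹ := by rw [hz]; group
      rw [hzu] at h1
      rw [h1]; exact hp
    · rw [if_neg hz] at hp; exact absurd rfl hp
  · rintro ⟨a, ha⟩
    refine ⟨(z • a, z * x⁻¹), ?_⟩
    rw [cross_h, if_pos (by rw [inv_mul_cancel_right])]
    have h1 := hact_h z a (x⁻¹ • i) (z⁻¹ • j)
    rw [smul_smul, smul_inv_smul] at h1
    rw [h1]; exact ha

lemma cross_leLeft_iff (j i : I') (z x : Om) :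
    (cross B hact_h hact_inv).leLeft (j, z) (i, x) ↔ B.leLeft (z⁻¹ • j) (x⁻¹ • i) := by
  constructor
  · intro h
    have key : ∀ q : I' × Om, (cross B hact_h hact_inv).leLeft (j, z) q →
        B.leLeft (z⁻¹ • j) (q.2⁻¹ • q.1) := by
      intro q hq
      induction hq with
      | refl => exact Relation.ReflTransGen.refl
      | tail hac hcb ih =>
          rename_i c q'
          refine ih.tail ?_
          obtain ⟨c1, c2⟩ := c
          obtain ⟨q1, q2⟩ := q'
          exact (cross_leftstep_iff B hact_h hact_inv c1 q1 c2 q2).mp hcb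
    exact key (i, x) h
  · intro h
    have key : ∀ a b : I', B.leLeft a b → ∀ u v : Om,
        (cross B hact_h hact_inv).leLeft (u • a, u) (v • b, v) := by
      intro a b hab
      induction hab with
      | refl =>
          intro u v
          refine Relation.ReflTransGen.single ?_
          refine (cross_leftstep_iff B hact_h hact_inv _ _ _ _).mpr ?_
          simp only [inv_smul_smul]
          exact exists_h_left B hact_h hact_inv a
      | tail hac hcb ih =>
          intro u v
          rename_i c b'
          refine (ih u v).tail ?_
          refine (cross_leftstep_iff B hact_h hact_inv _ _ _ _).mpr ?_
          simp only [inv_smul_smul]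
          exact hcb
    have := key (z⁻¹ • j) (x⁻¹ • i) h z x
    simpa [smul_inv_smul] using this

lemma cross_twostep_iff (j i : I') (z x : Om) :
    (∃ p : I' × Om, (cross B hact_h hact_inv).h (i, x) p (j, z) ≠ 0
        ∨ (cross B hact_h hact_inv).h p (i, x) (j, z) ≠ 0)
      ↔ (∃ b, B.h i b j ≠ 0) ∨ (∃ a, B.h a (x⁻¹ • i) (z⁻¹ • j) ≠ 0) := by
  rw [exists_or]
  refine or_congr ?_ (cross_leftstep_iff B hact_h hact_inv j i z x)
  constructor
  · rintro ⟨⟨b, u⟩, hp⟩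
    rw [cross_h] at hp
    by_cases hz : z = x * u
    · rw [if_pos hz] at hp
      exact ⟨x • b, hp⟩
    · rw [if_neg hz] at hp; exact absurd rfl hp
  · rintro ⟨b, hb⟩
    refine ⟨(x⁻¹ • b, x⁻¹ * z), ?_⟩
    rw [cross_h, if_pos (by rw [mul_inv_cancel_left]), smul_inv_smul]
    exact hb

lemma cross_mobility (j : I') (z u : Om) :
    (cross B hact_h hact_inv).leTwo (j, z) (j, u) := by
  refine Relation.ReflTransGen.single ?_
  refine (cross_twostep_iff B hact_h hact_inv j j z u).mpr (Or.inl ?_)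
  exact exists_h_right B hact_h hact_inv j

lemma cross_leTwo_iff (j i : I') (z x : Om) :
    (cross B hact_h hact_inv).leTwo (j, z) (i, x) ↔ ∃ y : Om, B.leTwo (y • j) i := by
  constructor
  · intro h
    have key : ∀ q : I' × Om, (cross B hact_h hact_inv).leTwo (j, z) q →
        ∃ y : Om, B.leTwo (y • j) q.1 := by
      intro q hq
      induction hq with
      | refl =>
          refine ⟨1, ?_⟩
          rw [one_smul]
          exact Relation.ReflTransGen.refl
      | tail hac hcb ih =>
          rename_i c q'
          obtain ⟨y, hy⟩ := ih
          obtain ⟨c1, c2⟩ := c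
          obtain ⟨q1, q2⟩ := q'
          rcases (cross_twostep_iff B hact_h hact_inv c1 q1 c2 q2).mp hcb with h1 | h1
          · obtain ⟨b, hb⟩ := h1
            exact ⟨y, hy.trans (Relation.ReflTransGen.single ⟨b, Or.inl hb⟩)⟩
          · obtain ⟨a, ha⟩ := h1
            have step : B.leTwo (c2⁻¹ • c1) (q2⁻¹ • q1) :=
              Relation.ReflTransGen.single ⟨a, Or.inr ha⟩
            have step2 := leTwo_smul B hact_h hact_inv q2 step
            rw [smul_inv_smul, smul_smul] at step2
            have hy2 := leTwo_smul B hact_h hact_inv (q2 * c2⁻¹) hy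
            rw [smul_smul] at hy2
            exact ⟨q2 * c2⁻¹ * y, hy2.trans step2⟩
    exact key (i, x) h
  · rintro ⟨y, hy⟩
    have claimA : ∀ a b : I', B.leTwo a b → ∀ u : Om,
        (cross B hact_h hact_inv).leTwo (u • a, u) (u • b, u) := by
      intro a b hab
      induction hab with
      | refl => intro u; exact Relation.ReflTransGen.refl
      | tail hac hcb ih =>
          intro u
          rename_i c b'
          refine (ih u).tail ?_
          refine (cross_twostep_iff B hact_h hact_inv _ _ _ _).mpr ?_
          obtain ⟨i', hi'⟩ := hcb
          rcases hi' with h1 | h1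
          · exact Or.inl ⟨u • i', by rw [hact_h]; exact h1⟩
          · refine Or.inr ⟨i', ?_⟩
            simp only [inv_smul_smul]
            exact h1
    have hy' : B.leTwo j (y⁻¹ • i) := by
      have := leTwo_smul B hact_h hact_inv y⁻¹ hy
      rwa [inv_smul_smul] at this
    have t1 := cross_mobility B hact_h hact_inv j z 1
    have t2 := claimA j (y⁻¹ • i) hy' 1
    simp only [one_smul] at t2
    have t3 : (cross B hact_h hact_inv).leTwo (y⁻¹ • i, 1) (i, y) := by
      refine Relation.ReflTransGen.single ?_
      refine (cross_twostep_iff B hact_h hact_inv _ _ _ _).mpr (Or.inr ?_)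
      simp only [inv_one, one_smul]
      exact exists_h_left B hact_h hact_inv (y⁻¹ • i)
    have t4 := cross_mobility B hact_h hact_inv i y x
    exact ((t1.trans t2).trans t3).trans t4

lemma cross_simLeft_iff (a b : I') (u v : Om) :
    (cross B hact_h hact_inv).simLeft (a, u) (b, v) ↔ B.simLeft (u⁻¹ • a) (v⁻¹ • b) := by
  unfold BasedAlgebra.simLeft
  rw [cross_leLeft_iff, cross_leLeft_iff]

end Statement10Aux

/-- Lusztig 1.11(ii). Let `𝔄₀` be an excellent based `A`-algebra with
index set `I'` and let `Ω` be a finite group acting on `I'` compatibly with the structure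
constants, the involution and the distinguished subset. Then the crossed product
`𝔄₀⋊Ω`, with basis `{c_w ⊗ x}`, product `(c_w ⊗ x)(c_{w'} ⊗ x') = (c_w c_{x(w')}) ⊗ xx'`,
involution `(w,x)^! = (x⁻¹(w^!), x⁻¹)` and distinguished subset `{(d,1) : d ∈ I₀'}`, is an
excellent based `A`-algebra. -/
theorem statement10 {I' Om : Type} [Fintype I'] [DecidableEq I']
    [Fintype Om] [DecidableEq Om] [Group Om] [MulAction Om I']
    (B : BasedAlgebra I') (hB : B.Excellent)
    (hact_h : ∀ (x : Om) (w w' w'' : I'), B.h (x • w) (x • w') (x • w'') = B.h w w' w'')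
    (hact_inv : ∀ (x : Om) (w : I'), x • B.einv w = B.einv (x • w))
    (hact_I0 : ∀ (x : Om) (w : I'), w ∈ B.I0 ↔ x • w ∈ B.I0) :
    ∃ E : BasedAlgebra (I' × Om),
      (∀ (w w' w'' : I') (x x' x'' : Om),
        E.h (w, x) (w', x') (w'', x'') =
          if x'' = x * x' then B.h w (x • w') w'' else 0) ∧
      (∀ (w : I') (x : Om), E.einv (w, x) = (x⁻¹ • B.einv w, x⁻¹)) ∧
      (∀ p : I' × Om, p ∈ E.I0 ↔ p.1 ∈ B.I0 ∧ p.2 = 1) ∧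
      (∀ (w : I') (x : Om), E.e (w, x) = if x = 1 then B.e w else 0) ∧
      E.Excellent := by
  refine ⟨Statement10Aux.cross B hact_h hact_inv, fun w w' w'' x x' x'' => rfl,
    fun w x => rfl, Statement10Aux.cross_I0 B hact_h hact_inv, fun w x => rfl, ?_⟩
  refine ⟨?_, ?_, ?_, ?_, ?_, ?_, ?_, ?_, ?_, ?_, ?_, ?_⟩
  · -- Q1
    rintro ⟨j, zj⟩ hj ⟨w, x⟩ ⟨w', x'⟩ hne
    rw [Statement10Aux.cross_I0] at hj
    obtain ⟨hj0, hz1⟩ := hj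
    have hz1' : zj = 1 := hz1
    subst hz1'
    rw [Statement10Aux.hstar_cross] at hne
    by_cases hc : (1 : Om) = (x * x')⁻¹
    swap
    · rw [if_neg hc] at hne; exact absurd rfl hne
    rw [if_pos hc] at hne
    simp only [one_smul, one_mul] at hne
    have hkey := hB.q1 j hj0 w (x • w') hne
    have hx' : x' = x⁻¹ := by
      have h1 : x * x' = 1 := by rw [← inv_inv (x * x'), ← hc, inv_one]
      have h2 := congrArg (fun t => x⁻¹ * t) h1
      simpa [← mul_assoc] using h2
    show (w', x') = (x⁻¹ • B.einv w, x⁻¹)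
    rw [Prod.mk.injEq]
    exact ⟨by rw [← hkey, inv_smul_smul], hx'⟩
  · -- Q2
    rintro ⟨w, x⟩
    obtain ⟨j, ⟨hj0, hjne⟩, huniq⟩ := hB.q2 (x⁻¹ • w)
    refine ⟨(j, 1), ⟨?_, ?_⟩, ?_⟩
    · rw [Statement10Aux.cross_I0]; exact ⟨hj0, rfl⟩
    · rw [Statement10Aux.hstar_einv_cross, if_pos rfl]; exact hjne
    · rintro ⟨j', z'⟩ ⟨hmem, hne⟩
      rw [Statement10Aux.cross_I0] at hmem
      obtain ⟨hj'0, hz'⟩ := hmem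
      have hz'' : z' = 1 := hz'
      subst hz''
      rw [Statement10Aux.hstar_einv_cross, if_pos rfl] at hne
      rw [Prod.mk.injEq]
      exact ⟨huniq j' ⟨hj'0, hne⟩, rfl⟩
  · -- Q3
    rintro ⟨j, z⟩ ⟨i, x⟩ hle
    obtain ⟨y, hy⟩ := (Statement10Aux.cross_leTwo_iff B hact_h hact_inv j i z x).mp hle
    rw [Statement10Aux.af_cross, Statement10Aux.af_cross]
    have := hB.q3 (y • j) i hy
    rwa [Statement10Aux.af_smul B hact_h hact_inv] at this
  · -- Q4
    rintro ⟨j, zj⟩ hj ⟨w, x⟩ hne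
    rw [Statement10Aux.cross_I0] at hj
    obtain ⟨hj0, hz1⟩ := hj
    have hz1' : zj = 1 := hz1
    subst hz1'
    rw [Statement10Aux.hstar_einv_cross, if_pos rfl] at hne ⊢
    exact hB.q4 j hj0 (x⁻¹ • w) hne
  · -- Q5
    rintro ⟨w, x⟩ ⟨w', x'⟩ ⟨j, z⟩
    rw [Statement10Aux.hstar_cross, Statement10Aux.hstar_cross]
    by_cases hz : z = (x * x')⁻¹
    · have hx : x = (x' * z)⁻¹ := by rw [hz]; group
      rw [if_pos hz, if_pos hx]
      subst hz
      rw [hB.q5]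
      have h2 := Statement10Aux.hstar_smul B hact_h hact_inv (x * x')⁻¹ (x • w')
        ((x * x') • j) w
      rw [← h2]
      have hone : x'⁻¹ * x⁻¹ * (x * x') = 1 := by group
      simp [smul_smul, inv_smul_smul, hone, mul_inv_rev]
    · have hx : x ≠ (x' * z)⁻¹ := by intro h; apply hz; rw [h]; group
      rw [if_neg hz, if_neg hx]
  · -- Q6
    rintro ⟨w, x⟩ ⟨w', x'⟩ ⟨j, z⟩ hne
    rw [Statement10Aux.hstar_cross] at hne
    by_cases hz : z = (x * x')⁻¹
    swap
    · rw [if_neg hz] at hne; exact absurd rfl hne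
    rw [if_pos hz] at hne
    subst hz
    obtain ⟨A1, A2, A3⟩ := hB.q6 _ _ _ hne
    have hg : (x * x')⁻¹ * x = x'⁻¹ := by group
    refine ⟨?_, ?_, ?_⟩
    · show (Statement10Aux.cross B hact_h hact_inv).simLeft (w, x) (x'⁻¹ • B.einv w', x'⁻¹)
      rw [Statement10Aux.cross_simLeft_iff, inv_inv, smul_inv_smul]
      rw [hg] at A1
      rw [← hact_inv x'⁻¹ w'] at A1
      have A1' := Statement10Aux.simLeft_smul B hact_h hact_inv x' A1
      rw [smul_smul, smul_smul] at A1'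
      have hg2 : x' * (x * x')⁻¹ = x⁻¹ := by group
      have hg3 : x' * x'⁻¹ = 1 := by group
      rw [hg2, hg3, one_smul] at A1'
      exact A1'
    · show (Statement10Aux.cross B hact_h hact_inv).simLeft (w', x')
        (((x * x')⁻¹)⁻¹ • B.einv j, ((x * x')⁻¹)⁻¹)
      rw [Statement10Aux.cross_simLeft_iff]
      simp only [inv_inv, inv_smul_smul]
      rw [hg] at A2
      exact A2
    · show (Statement10Aux.cross B hact_h hact_inv).simLeft (j, (x * x')⁻¹)
        (x⁻¹ • B.einv w, x⁻¹)
      rw [Statement10Aux.cross_simLeft_iff]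
      simp only [inv_inv, smul_inv_smul]
      rw [← hact_inv ((x * x')⁻¹) w] at A3
      have A3' := Statement10Aux.simLeft_smul B hact_h hact_inv (x * x') A3
      rw [smul_inv_smul] at A3'
      exact A3'
  · -- Q7
    rintro ⟨j, z⟩ ⟨i, x⟩ hle haf
    rw [Statement10Aux.af_cross, Statement10Aux.af_cross] at haf
    rw [Statement10Aux.cross_leLeft_iff] at hle
    have hsim := hB.q7 _ _ hle (by
      rw [Statement10Aux.af_smul B hact_h hact_inv, Statement10Aux.af_smul B hact_h hact_inv]
      exact haf)
    exact (Statement10Aux.cross_simLeft_iff B hact_h hact_inv j i z x).mpr hsim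
  · -- Q8
    rintro ⟨j, z⟩ ⟨i, x⟩ hle haf
    rw [Statement10Aux.af_cross, Statement10Aux.af_cross] at haf
    obtain ⟨y, hy⟩ := (Statement10Aux.cross_leTwo_iff B hact_h hact_inv j i z x).mp hle
    have hsim := hB.q8 (y • j) i hy (by
      rw [Statement10Aux.af_smul B hact_h hact_inv]
      exact haf)
    refine ⟨hle, ?_⟩
    refine (Statement10Aux.cross_leTwo_iff B hact_h hact_inv i j x z).mpr ⟨y⁻¹, ?_⟩
    have := Statement10Aux.leTwo_smul B hact_h hact_inv y⁻¹ hsim.2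
    rwa [inv_smul_smul] at this
  · -- Q9a
    rintro ⟨i, x⟩
    obtain ⟨j, ⟨hj0, hjs⟩, huniq⟩ := hB.q9a (x⁻¹ • i)
    refine ⟨(j, 1), ⟨?_, ?_⟩, ?_⟩
    · rw [Statement10Aux.cross_I0]; exact ⟨hj0, rfl⟩
    · rw [Statement10Aux.cross_simLeft_iff]
      simpa using hjs
    · rintro ⟨j', z'⟩ ⟨hmem, hsim⟩
      rw [Statement10Aux.cross_I0] at hmem
      obtain ⟨hj'0, hz'⟩ := hmem
      have hz'' : z' = 1 := hz'
      subst hz''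
      rw [Statement10Aux.cross_simLeft_iff] at hsim
      simp only [inv_one, one_smul] at hsim
      rw [Prod.mk.injEq]
      exact ⟨huniq j' ⟨hj'0, hsim⟩, rfl⟩
  · -- Q9b
    rintro ⟨i, x⟩ ⟨j, z⟩ hmem hsim
    rw [Statement10Aux.cross_I0] at hmem
    obtain ⟨hj0, hz⟩ := hmem
    have hz' : z = 1 := hz
    subst hz'
    rw [Statement10Aux.hstar_einv_cross, if_pos rfl]
    rw [Statement10Aux.cross_simLeft_iff] at hsim
    simp only [inv_one, one_smul] at hsim
    exact hB.q9b (x⁻¹ • i) j hj0 hsim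
  · -- Q10
    rintro ⟨i, x⟩
    show (Statement10Aux.cross B hact_h hact_inv).simTwo (i, x) (x⁻¹ • B.einv i, x⁻¹)
    constructor
    · refine (Statement10Aux.cross_leTwo_iff B hact_h hact_inv i (x⁻¹ • B.einv i)
        x x⁻¹).mpr ⟨x⁻¹, ?_⟩
      exact Statement10Aux.leTwo_smul B hact_h hact_inv x⁻¹ (hB.q10 i).1
    · refine (Statement10Aux.cross_leTwo_iff B hact_h hact_inv (x⁻¹ • B.einv i) i
        x⁻¹ x).mpr ⟨x, ?_⟩
      rw [smul_inv_smul]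
      exact (hB.q10 i).2
  · -- Q11
    rintro ⟨i, x⟩ ⟨i', x'⟩ ⟨j, z⟩ ⟨k, u⟩ haf p q
    rw [Statement10Aux.af_cross, Statement10Aux.af_cross] at haf
    rw [Fintype.sum_prod_type, Fintype.sum_prod_type]
    simp only [Statement10Aux.cross_h, apply_ite (fun f => lcoeff f p),
      apply_ite (fun f => lcoeff f q), Statement10Aux.lcoeff_zero]
    simp only [ite_mul, zero_mul, mul_ite, mul_zero]
    have swapL : ∀ (m : I') (y : Om),
        (if z = x * y then if y = u * x' then
            lcoeff (B.h k (u • i') m) p * lcoeff (B.h i (x • m) j) q else 0 else 0)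
        = (if y = u * x' then if z = x * y then
            lcoeff (B.h k (u • i') m) p * lcoeff (B.h i (x • m) j) q else 0 else 0) := by
      intros; split_ifs <;> rfl
    have swapR : ∀ (m : I') (y : Om),
        (if z = y * x' then if y = x * u then
            lcoeff (B.h i (x • k) m) q * lcoeff (B.h m (y • i') j) p else 0 else 0)
        = (if y = x * u then if z = y * x' then
            lcoeff (B.h i (x • k) m) q * lcoeff (B.h m (y • i') j) p else 0 else 0) := by
      intros; split_ifs <;> rfl
    simp only [swapL, swapR, Finset.sum_ite_eq', Finset.mem_univ, if_true]
    by_cases hz : z = x * u * x'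
    · subst hz
      simp only [mul_assoc, eq_self_iff_true, if_true]
      have key := hB.q11 i ((x * u) • i') j (x • k)
        (by rw [Statement10Aux.af_smul B hact_h hact_inv]; exact haf) p q
      rw [← key]
      rw [← Equiv.sum_comp (MulAction.toPerm x)
        (fun m => lcoeff (B.h (x • k) ((x * u) • i') m) p * lcoeff (B.h i m j) q)]
      refine Finset.sum_congr rfl fun m _ => ?_
      simp only [MulAction.toPerm_apply]
      rw [← hact_h x k (u • i') m, smul_smul]
    · rw [Finset.sum_congr rfl (fun m _ => if_neg
          (fun hc => hz (by rw [mul_assoc]; exact hc))),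
        Finset.sum_congr rfl (fun m _ => if_neg hz)]
end
end

section
/- Let 𝔄 be an excellent based A-algebra, let k be an algebraically closed field of characteristic 0, and let J = k ⊗_ℤ 𝔄^∞. Let Γ be a left cell of I and let [Γ] denote the k-span of {t_i : i ∈ Γ} in J. Then [Γ] is a left ideal of J. Moreover, if d is the unique element of Γ ∩ I₀, then for every finite-dimensional simple J-module M the k-linear map Hom_J([Γ], M) → t_d M, ξ ↦ ξ(t_d), is an isomorphism; consequently the trace of t_d on M equals dim_k Hom_J([Γ], M), the multiplicity of M in the J-module [Γ]. -/
open scoped Classical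
open Finset

noncomputable section

/-- Scalar action by `a : J` on a `J`-module `M`, as a `k`-linear endomorphism of `M`. -/
def smulEnd (k J M : Type) [CommSemiring k] [Ring J] [Algebra k J] [AddCommGroup M]
    [Module J M] [Module k M] [IsScalarTower k J M] (a : J) : M →ₗ[k] M where
  toFun m := a • m
  map_add' := smul_add a
  map_smul' c m := by
    simp only [RingHom.id_apply]
    rw [← algebraMap_smul J c m, ← mul_smul, ← Algebra.commutes c a, mul_smul,
      algebraMap_smul]


namespace BasedAlgebra

variable {I : Type} [Fintype I] [DecidableEq I]

lemma simLeft_symm (B : BasedAlgebra I) {i j : I} (h : B.simLeft i j) : B.simLeft j i :=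
  ⟨h.2, h.1⟩

lemma simLeft_trans (B : BasedAlgebra I) {i j l : I} (h1 : B.simLeft i j)
    (h2 : B.simLeft j l) : B.simLeft i l :=
  ⟨h1.1.trans h2.1, h2.2.trans h1.2⟩

/-- Key coefficient computation: if `d ∈ I₀` and `d ∼_left i`, then
`h*_{i,d,j^!} = δ_{j,i}`, i.e. `t_i t_d = t_i`. -/
lemma hstar_right_dist {B : BasedAlgebra I} (hB : B.Excellent) {d i : I}
    (hd0 : d ∈ B.I0) (hsim : B.simLeft d i) (j : I) :
    B.hstar i d (B.einv j) = if j = i then 1 else 0 := by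
  by_cases hji : j = i
  · subst hji
    rw [if_pos rfl, hB.q5, hB.q5]
    exact hB.q9b j d hd0 hsim
  · rw [if_neg hji]
    by_contra hne
    rw [hB.q5, hB.q5] at hne
    have := hB.q1 d hd0 (B.einv j) i hne
    rw [B.einv_invol] at this
    exact hji this.symm

end BasedAlgebra

/-- Lusztig 1.12(a). Let `𝔄` be an excellent based `A`-algebra, `k` an
algebraically closed field of characteristic `0`, and `J = k ⊗_ℤ 𝔄^∞` (realized as a
`k`-algebra `J` with basis `t : I → J` satisfying the multiplication rule of `𝔄^∞`).
Let `Γ` be a left cell and `[Γ]` the `k`-span of `{t_i : i ∈ Γ}`. Then `[Γ]` is a left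
ideal of `J`; and if `d` is the unique element of `Γ ∩ I₀`, then for every
finite-dimensional simple `J`-module `M` the map `ξ ↦ ξ(t_d)` from `Hom_J([Γ], M)` to
`t_d M` is an isomorphism; consequently the trace of `t_d` on `M` equals
`dim_k Hom_J([Γ], M)`, the multiplicity of `M` in `[Γ]`. -/


theorem statement12 {I : Type} [Fintype I] [DecidableEq I]
    (B : BasedAlgebra I) (hB : B.Excellent)
    {k : Type} [Field k] [IsAlgClosed k] [CharZero k]
    {J : Type} [Ring J] [Algebra k J] (t : I → J)
    (hli : LinearIndependent k t)
    (hsp : Submodule.span k (Set.range t) = ⊤)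
    (hmul : ∀ i i', t i * t i' = ∑ j, ((B.hstar i i' (B.einv j) : ℤ) : k) • t j)
    (hone : (1 : J) = ∑ i ∈ B.I0, t i)
    (c : Set I) (hc : B.IsLeftCell c)
    (d : I) (hd0 : d ∈ B.I0) (hdc : d ∈ c)
    (hduniq : ∀ d' ∈ B.I0, d' ∈ c → d' = d)
    {M : Type} [AddCommGroup M] [Module J M] [Module k M] [IsScalarTower k J M]
    [SMulCommClass k J M] [SMulCommClass J k M]
    [FiniteDimensional k M] [IsSimpleModule J M] :
    ((Submodule.span J (t '' c) : Set J) = (Submodule.span k (t '' c) : Set J)) ∧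
    Function.Injective (fun f : (Submodule.span J (t '' c)) →ₗ[J] M =>
      f ⟨t d, Submodule.subset_span ⟨d, hdc, rfl⟩⟩) ∧
    (Set.range (fun f : (Submodule.span J (t '' c)) →ₗ[J] M =>
      f ⟨t d, Submodule.subset_span ⟨d, hdc, rfl⟩⟩) = Set.range (fun m : M => t d • m)) ∧
    LinearMap.trace k M (smulEnd k J M (t d)) =
      (Module.finrank k ((Submodule.span J (t '' c)) →ₗ[J] M) : k) := by
  classical
  obtain ⟨i₀, rfl⟩ := hc
  set c : Set I := {j | B.simLeft j i₀} with hcdef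
  -- basic cell facts
  have hsimd : ∀ i ∈ c, B.simLeft d i := fun i hi =>
    B.simLeft_trans hdc (B.simLeft_symm hi)
  -- `t i * t d = t i` for `i ∈ c`
  have tid : ∀ i ∈ c, t i * t d = t i := by
    intro i hi
    rw [hmul]
    rw [Finset.sum_eq_single i]
    · rw [B.hstar_right_dist hB hd0 (hsimd i hi) i, if_pos rfl]
      norm_num
    · intro j _ hji
      rw [B.hstar_right_dist hB hd0 (hsimd i hi) j, if_neg hji]
      norm_num
    · intro h; exact absurd (Finset.mem_univ i) h
  have tdd : t d * t d = t d := tid d hdc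
  -- [Γ] as a k-submodule
  set Nk : Submodule k J := Submodule.span k (t '' c) with hNk
  -- closure of Nk under left multiplication by basis elements
  have hclos0 : ∀ (a : I) (i : I), i ∈ c → t a * t i ∈ Nk := by
    intro a i hi
    rw [hmul]
    refine Submodule.sum_mem _ fun j _ => ?_
    by_cases hz : B.hstar a i (B.einv j) = 0
    · rw [hz]; norm_num
    · refine Submodule.smul_mem _ _ (Submodule.subset_span ⟨j, ?_, rfl⟩)
      have h6 := (hB.q6 a i (B.einv j) hz).2.1
      rw [B.einv_invol] at h6
      exact B.simLeft_trans (B.simLeft_symm h6) hi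
  have hclos1 : ∀ (a : J) (i : I), i ∈ c → a * t i ∈ Nk := by
    intro a i hi
    have hsub : Set.range t ⊆ {a : J | a * t i ∈ Nk} := by
      rintro _ ⟨b, rfl⟩
      exact hclos0 b i hi
    have : a ∈ Submodule.span k (Set.range t) := by rw [hsp]; trivial
    refine Submodule.span_induction (p := fun a _ => a * t i ∈ Nk)
      (fun x hx => hsub hx) (by simp) (fun x y _ _ hx hy => by
        show (x + y) * t i ∈ Nk
        rw [add_mul]; exact Submodule.add_mem _ hx hy)
      (fun r x _ hx => by
        show (r • x) * t i ∈ Nk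
        rw [smul_mul_assoc]; exact Submodule.smul_mem _ _ hx) this
  have hclos : ∀ (a : J), ∀ x ∈ Nk, a * x ∈ Nk := by
    intro a x hx
    refine Submodule.span_induction (p := fun x _ => a * x ∈ Nk)
      ?_ (by simp) (fun x y _ _ hx hy => by
        show a * (x + y) ∈ Nk
        rw [mul_add]; exact Submodule.add_mem _ hx hy)
      (fun r x _ hx => by
        show a * (r • x) ∈ Nk
        rw [mul_smul_comm]; exact Submodule.smul_mem _ _ hx) hx
    rintro _ ⟨i, hi, rfl⟩
    exact hclos1 a i hi
  -- Nk as a J-submodule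
  set P : Submodule J J :=
    { carrier := Nk
      add_mem' := fun hx hy => Submodule.add_mem _ hx hy
      zero_mem' := Submodule.zero_mem _
      smul_mem' := fun a x hx => by
        simpa only [smul_eq_mul, SetLike.mem_coe] using hclos a x hx } with hP
  -- Part 1
  have part1 : (Submodule.span J (t '' c) : Set J) = (Nk : Set J) := by
    apply Set.Subset.antisymm
    · exact Submodule.span_le (p := P) |>.mpr
        (fun x hx => Submodule.subset_span hx)
    · exact Submodule.span_le
        (p := (Submodule.span J (t '' c)).restrictScalars k) |>.mpr
        (fun x hx => Submodule.subset_span hx)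
  refine ⟨part1, ?_⟩
  set NJ := Submodule.span J (t '' c) with hNJ
  set tdE : NJ := ⟨t d, Submodule.subset_span ⟨d, hdc, rfl⟩⟩ with htdE
  -- Part 2: injectivity
  have part2 : Function.Injective (fun f : NJ →ₗ[J] M => f tdE) := by
    intro f g hfg
    simp only at hfg
    refine LinearMap.ext_on Submodule.span_span_coe_preimage ?_
    rintro x ⟨i, hi, hxi⟩
    have hx : x = t i • tdE := by
      refine Subtype.ext ?_
      show (x : J) = t i * t d
      rw [tid i hi, hxi]
    rw [hx, map_smul, map_smul, hfg]
  refine ⟨part2, ?_⟩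
  -- Part 3: range
  have part3 : (Set.range (fun f : NJ →ₗ[J] M => f tdE)
      = Set.range (fun m : M => t d • m)) := by
    apply Set.Subset.antisymm
    · rintro _ ⟨f, rfl⟩
      refine ⟨f tdE, ?_⟩
      have hx : tdE = t d • tdE := by
        refine Subtype.ext ?_
        show t d = t d * t d
        rw [tdd]
      show t d • f tdE = f tdE
      conv_rhs => rw [hx]
      exact (map_smul f _ _).symm
    · rintro _ ⟨m, rfl⟩
      refine ⟨{ toFun := fun x => (x : J) • m
                map_add' := fun x y => by
                  show ((x : J) + (y : J)) • m = _
                  rw [add_smul]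
                map_smul' := fun a x => by
                  show ((a • x : NJ) : J) • m = a • ((x : J) • m)
                  rw [Submodule.coe_smul, smul_eq_mul, mul_smul] }, rfl⟩
  refine ⟨part3, ?_⟩
  -- Part 4: the trace identity
  set φ : (NJ →ₗ[J] M) →ₗ[k] M :=
    { toFun := fun f => f tdE
      map_add' := fun f g => rfl
      map_smul' := fun a f => rfl } with hφ
  have hφinj : Function.Injective φ := part2
  haveI : FiniteDimensional k (NJ →ₗ[J] M) := FiniteDimensional.of_injective φ hφinj
  have hproj : LinearMap.IsProj (LinearMap.range (smulEnd k J M (t d)))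
      (smulEnd k J M (t d)) := by
    constructor
    · intro x
      exact LinearMap.mem_range_self _ x
    · rintro _ ⟨y, rfl⟩
      show t d • (t d • y) = t d • y
      rw [← mul_smul, tdd]
  have hrange : LinearMap.range φ = LinearMap.range (smulEnd k J M (t d)) := by
    ext m
    simp only [LinearMap.mem_range]
    constructor
    · rintro ⟨f, hf⟩
      have : m ∈ Set.range (fun m : M => t d • m) := part3 ▸ ⟨f, hf⟩
      obtain ⟨y, hy⟩ := this
      exact ⟨y, hy⟩
    · rintro ⟨y, hy⟩
      have : m ∈ Set.range (fun f : NJ →ₗ[J] M => f tdE) := by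
        rw [part3]; exact ⟨y, hy⟩
      obtain ⟨f, hf⟩ := this
      exact ⟨f, hf⟩
  have hfr : Module.finrank k (LinearMap.range (smulEnd k J M (t d)))
      = Module.finrank k (NJ →ₗ[J] M) := by
    rw [← hrange]
    exact LinearMap.finrank_range_of_inj hφinj
  rw [hproj.trace, hfr]
end
end

section
/- Let 𝔄 be an excellent based A-algebra. Then: (i) every two-sided cell of I contains an element of I₀; (ii) for all i, j ∈ I, i ⪯ j if and only if i^! ⪯ j^!, so the involution i ↦ i^! preserves the preorder ⪯; (iii) the involution i ↦ i^! maps each two-sided cell of I onto itself; (iv) a(i^!) = a(i) for all i ∈ I, and the a-function is constant on each two-sided cell. -/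
open scoped Classical
open Finset

noncomputable section

/-- Lusztig 1.15. For an excellent based `A`-algebra: (i) every two-sided
cell contains an element of `I₀`; (ii) `i ⪯ j ↔ i^! ⪯ j^!`, so `i ↦ i^!` preserves the
preorder `⪯`; (iii) the involution maps each two-sided cell onto itself; (iv) `a(i^!) = a(i)`
for all `i`, and the `a`-function is constant on each two-sided cell. -/
theorem statement13 {I : Type} [Fintype I] [DecidableEq I]
    (B : BasedAlgebra I) (hB : B.Excellent) :
    (∀ c : Set I, B.IsTwoCell c → ∃ i ∈ c, i ∈ B.I0) ∧
    (∀ i j : I, B.leTwo i j ↔ B.leTwo (B.einv i) (B.einv j)) ∧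
    (∀ c : Set I, B.IsTwoCell c → ∀ i ∈ c, B.einv i ∈ c) ∧
    (∀ i : I, B.af (B.einv i) = B.af i) ∧
    (∀ i j : I, B.simTwo i j → B.af i = B.af j) := by
  -- leLeft implies leTwo
  have hmono : ∀ i j : I, B.leLeft i j → B.leTwo i j := by
    intro i j h
    refine Relation.ReflTransGen.mono ?_ _ _ h
    rintro a b ⟨i', hi'⟩
    exact ⟨i', Or.inr hi'⟩
  -- einv preserves leTwo
  have hinv : ∀ i j : I, B.leTwo i j → B.leTwo (B.einv i) (B.einv j) := by
    intro i j h
    refine Relation.ReflTransGen.lift B.einv ?_ _ _ h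
    rintro a b ⟨i', hi'⟩
    refine ⟨B.einv i', ?_⟩
    rcases hi' with h1 | h1
    · exact Or.inr (by rw [B.anti']; exact h1)
    · exact Or.inl (by rw [B.anti']; exact h1)
  have hiff : ∀ i j : I, B.leTwo i j ↔ B.leTwo (B.einv i) (B.einv j) := by
    intro i j
    constructor
    · exact hinv i j
    · intro h
      have := hinv _ _ h
      rwa [B.einv_invol, B.einv_invol] at this
  -- a constant on two-sided cells
  have haf : ∀ i j : I, B.simTwo i j → B.af i = B.af j := by
    intro i j ⟨h1, h2⟩
    exact le_antisymm (hB.q3 j i h2) (hB.q3 i j h1)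
  -- simTwo is transitive and symmetric
  have htrans : ∀ i j k : I, B.simTwo i j → B.simTwo j k → B.simTwo i k := by
    intro i j k ⟨a1, a2⟩ ⟨b1, b2⟩
    exact ⟨a1.trans b1, b2.trans a2⟩
  refine ⟨?_, hiff, ?_, ?_, haf⟩
  · rintro c ⟨i₀, rfl⟩
    obtain ⟨j, ⟨hj0, hjl⟩, _⟩ := hB.q9a i₀
    exact ⟨j, ⟨hmono _ _ hjl.1, hmono _ _ hjl.2⟩, hj0⟩
  · rintro c ⟨i₀, rfl⟩ i hi
    exact htrans _ _ _ ⟨(hB.q10 i).2, (hB.q10 i).1⟩ hi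
  · intro i
    exact haf _ _ ⟨(hB.q10 i).2, (hB.q10 i).1⟩
end
end

section
/- Let 𝔄 be an excellent based A-algebra, let k be an algebraically closed field of characteristic 0, and let J = k ⊗_ℤ 𝔄^∞. Let i ∈ I, and suppose there exists a finite-dimensional J-module M such that the trace of t_i on M is nonzero. Then i ∼_left i^!, i.e. i and i^! lie in the same left cell of I. -/
open scoped Classical
open Finset

noncomputable section

/-- Let `𝔄` be an excellent based `A`-algebra, `k` an algebraically
closed field of characteristic `0`, and `J = k ⊗_ℤ 𝔄^∞` (realized as a `k`-algebra `J`
with basis `t : I → J` satisfying the multiplication rule of `𝔄^∞`). If some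
finite-dimensional `J`-module `M` has `tr(t_i, M) ≠ 0`, then `i ∼_left i^!`. -/
theorem statement14 {I : Type} [Fintype I] [DecidableEq I]
    (B : BasedAlgebra I) (hB : B.Excellent)
    {k : Type} [Field k] [IsAlgClosed k] [CharZero k]
    {J : Type} [Ring J] [Algebra k J] (t : I → J)
    (hli : LinearIndependent k t)
    (hsp : Submodule.span k (Set.range t) = ⊤)
    (hmul : ∀ i i', t i * t i' = ∑ j, ((B.hstar i i' (B.einv j) : ℤ) : k) • t j)
    (hone : (1 : J) = ∑ i ∈ B.I0, t i)
    (i : I)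
    {M : Type} [AddCommGroup M] [Module J M] [Module k M] [IsScalarTower k J M]
    [FiniteDimensional k M]
    (htr : LinearMap.trace k M (smulEnd k J M (t i)) ≠ 0) :
    B.simLeft i (B.einv i) := by
  classical
  have hsumEnd : ∀ (s : Finset J), smulEnd k J M (∑ x ∈ s, x)
      = ∑ x ∈ s, smulEnd k J M x := by
    intro s
    ext m
    simp [smulEnd, Finset.sum_smul]
  have hcomp : ∀ a b : J, smulEnd k J M (a * b)
      = (smulEnd k J M a) ∘ₗ (smulEnd k J M b) := by
    intro a b; ext m; simp [smulEnd, mul_smul]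
  have hzero : smulEnd k J M (0 : J) = 0 := by ext m; simp [smulEnd]
  have hsum : LinearMap.trace k M (smulEnd k J M (t i))
      = ∑ d ∈ B.I0, LinearMap.trace k M (smulEnd k J M (t i * t d)) := by
    have hti : t i = ∑ d ∈ B.I0, t i * t d := by
      rw [← Finset.mul_sum, ← hone, mul_one]
    conv_lhs => rw [hti]
    have : smulEnd k J M (∑ d ∈ B.I0, t i * t d)
        = ∑ d ∈ B.I0, smulEnd k J M (t i * t d) := by
      ext m; simp [smulEnd, Finset.sum_smul]
    rw [this, map_sum]
  have hex : ∃ d ∈ B.I0, LinearMap.trace k M (smulEnd k J M (t i * t d)) ≠ 0 := by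
    by_contra h
    push_neg at h
    rw [hsum] at htr
    exact htr (Finset.sum_eq_zero h)
  obtain ⟨d, hd, htd⟩ := hex
  have key : ∀ a b : I, LinearMap.trace k M (smulEnd k J M (t a * t b)) ≠ 0 →
      ∃ j, B.hstar a b (B.einv j) ≠ 0 := by
    intro a b hne
    by_contra h
    push_neg at h
    have hz : t a * t b = 0 := by
      rw [hmul]
      apply Finset.sum_eq_zero
      intro j _
      simp [h j]
    rw [hz, hzero, map_zero] at hne
    exact hne rfl
  have htd2 : LinearMap.trace k M (smulEnd k J M (t d * t i)) ≠ 0 := by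
    rw [hcomp] at htd ⊢
    rwa [LinearMap.trace_comp_comm']
  obtain ⟨j1, hj1⟩ := key i d htd
  obtain ⟨j2, hj2⟩ := key d i htd2
  have q6a := (hB.q6 _ _ _ hj1).1
  have q6b := (hB.q6 _ _ _ hj2).1
  have hed : B.einv d = d := B.I0_fixed d hd
  rw [hed] at q6a
  exact ⟨q6a.1.trans q6b.1, q6b.2.trans q6a.2⟩
end
end
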